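/- Let G(E) be a well-formed TFG for (N1,m1) ▷_E (N2,m2). If (N1,m1) is safe (1-bounded), then (N2,m2) is safe. -/

import Mathlib

open Finset

/-- A Petri net over a type of places `P`. -/
structure PetriNet (P : Type) where
  Trans : Type
  pre : Trans → P → ℕ
  post : Trans → P → ℕ

/-- Firing relation between markings. -/
def PetriNet.fire {P : Type} (N : PetriNet P) (m m' : P → ℕ) : Prop :=
  ∃ t : N.Trans, (∀ p, N.pre t p ≤ m p) ∧ ∀ p, m' p = m p - N.pre t p + N.post t p

/-- Reachability of a marking from an initial one. -/
def PetriNet.reach {P : Type} (N : PetriNet P) (m0 m : P → ℕ) : Prop :=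
  Relation.ReflTransGen N.fire m0 m

/-- A marked net is safe (1-bounded) when every reachable marking has at most one token per place. -/
def PetriNet.Safe {P : Type} (N : PetriNet P) (m0 : P → ℕ) : Prop :=
  ∀ m, N.reach m0 m → ∀ p, m p ≤ 1

/-- Two places are concurrent when some reachable marking marks both positively. -/
def PetriNet.ConcPlaces {P : Type} (N : PetriNet P) (m0 : P → ℕ) (p q : P) : Prop :=
  ∃ m, N.reach m0 m ∧ 0 < m p ∧ 0 < m q

/-- A Token Flow Graph: redundancy arcs `R`, agglomeration arcs `A` (disjoint from `R`,
enforced in well-formedness), and constant nodes given by `kval`. -/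
structure TFG (V : Type) [DecidableEq V] where
  R : Finset (V × V)
  A : Finset (V × V)
  kval : V → Option ℕ

variable {V : Type} [DecidableEq V]

def TFG.Edge (G : TFG V) (v w : V) : Prop := (v, w) ∈ G.R ∨ (v, w) ∈ G.A

/-- `G.Reach v w` means `v →* w`. -/
def TFG.Reach (G : TFG V) : V → V → Prop := Relation.ReflTransGen G.Edge

/-- Successor set `succ(v)` (includes `v` itself). -/
def TFG.succs (G : TFG V) (v : V) : Set V := {w | G.Reach v w}

/-- A root has no incoming arc. -/
def TFG.IsRoot (G : TFG V) (v : V) : Prop := ∀ w, ¬ G.Edge w v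

/-- A ∘-leaf has no outgoing agglomeration arc. -/
def TFG.IsCircLeaf (G : TFG V) (v : V) : Prop := ∀ w, (v, w) ∉ G.A

/-- The set `X` such that `v ∘→ X` (agglomeration children of `v`). -/
def TFG.aggChildren (G : TFG V) (v : V) : Finset V :=
  (G.A.filter (fun e => e.1 = v)).image Prod.snd

/-- The set `X` such that `X →• v` (redundancy parents of `v`). -/
def TFG.redParents (G : TFG V) (v : V) : Finset V :=
  (G.R.filter (fun e => e.2 = v)).image Prod.fst

/-- A configuration is a partial valuation of the nodes; it must agree with constant nodes. -/
def TFG.IsConfig (G : TFG V) (c : V → Option ℕ) : Prop :=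
  ∀ v n, G.kval v = some n → c v = some n

/-- A configuration is total when it is defined on every node. -/
def TotalConf (c : V → Option ℕ) : Prop := ∀ v, c v ≠ none

/-- Value of a configuration at a node (0 if undefined). -/
def cval (c : V → Option ℕ) (v : V) : ℕ := (c v).getD 0

/-- Well-definedness of a configuration: conditions (CBot) and (CEq). -/
def TFG.WellDef (G : TFG V) (c : V → Option ℕ) : Prop :=
  (∀ v w, G.Edge v w → (c v = none ↔ c w = none)) ∧
  (∀ v n, c v = some n →
    ((G.aggChildren v).Nonempty → n = ∑ w ∈ G.aggChildren v, cval c w) ∧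
    ((G.redParents v).Nonempty → n = ∑ w ∈ G.redParents v, cval c w))

/-- A system of reduction equations: `(v, X)` stands for the equation `v = ∑_{w ∈ X} w`. -/
abbrev EqSys (V : Type) := Finset (V × Finset V)

/-- A (non-negative integer) solution of the system `E`. -/
def Solves (E : EqSys V) (s : V → ℕ) : Prop :=
  ∀ e ∈ E, s e.1 = ∑ w ∈ e.2, s w

/-- `E, ⟦c⟧` is consistent: some solution of `E` extends the partial valuation `c`. -/
def ConsistentWith (E : EqSys V) (c : V → Option ℕ) : Prop :=
  ∃ s : V → ℕ, Solves E s ∧ ∀ v n, c v = some n → s v = n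

/-- Variables occurring in `E`. -/
def fvars (E : EqSys V) : Set V := {v | ∃ e ∈ E, v = e.1 ∨ v ∈ e.2}

/-- View a marking over the set of places `P` as a partial configuration over `V`. -/
def mconf (P : Set V) [DecidablePred (· ∈ P)] (m : ↥P → ℕ) : V → Option ℕ :=
  fun v => if h : v ∈ P then some (m ⟨v, h⟩) else none

/-- Restriction of a configuration to a set of places, seen as a marking. -/
def restrict (c : V → Option ℕ) (P : Set V) : ↥P → ℕ := fun p => cval c ↑p

/-- Compatibility `c ≡ m` of a configuration with a marking on `P`. -/
def CompatM (c : V → Option ℕ) (P : Set V) (m : ↥P → ℕ) : Prop :=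
  ∀ p : ↥P, c ↑p = some (m p)

/-- A solution of `E` agrees with a marking on `P`. -/
def AgreesOn (s : V → ℕ) (P : Set V) (m : ↥P → ℕ) : Prop := ∀ p : ↥P, s ↑p = m p

/-- `E`-equivalence `(N1,m1) ▷_E (N2,m2)`: conditions (A1), (A2), (A3). -/
structure EEquiv (E : EqSys V) (P1 P2 : Set V)
    (N1 : PetriNet ↥P1) (m1 : ↥P1 → ℕ) (N2 : PetriNet ↥P2) (m2 : ↥P2 → ℕ) : Prop where
  A1l : ∀ m, N1.reach m1 m → ∃ s, Solves E s ∧ AgreesOn s P1 m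
  A1r : ∀ m, N2.reach m2 m → ∃ s, Solves E s ∧ AgreesOn s P2 m
  A2 : ∃ s, Solves E s ∧ AgreesOn s P1 m1 ∧ AgreesOn s P2 m2
  A3 : ∀ m1' m2', (∃ s, Solves E s ∧ AgreesOn s P1 m1' ∧ AgreesOn s P2 m2') →
      (N1.reach m1 m1' ↔ N2.reach m2 m2')

/-- Well-formedness of a TFG for an equivalence statement: conditions (T1)–(T6). -/
structure WellFormed (G : TFG V) (E : EqSys V) (P1 P2 : Set V) : Prop where
  T1 : {v | G.kval v = none} = P1 ∪ P2 ∪ fvars E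
  T2 : ∀ v, G.kval v ≠ none → G.IsRoot v
  T3a : ∀ p p' q, (p, q) ∈ G.A → G.Edge p' q → p' = p
  T3b : ∀ p q, ¬((p, q) ∈ G.R ∧ (p, q) ∈ G.A)
  T4 : ∀ v X, ((X = G.aggChildren v ∨ X = G.redParents v) ∧ X.Nonempty) ↔ (v, X) ∈ E
  T5 : ∀ v, ¬ Relation.TransGen G.Edge v v
  T6root : ∀ v, G.kval v = none → (G.IsRoot v ↔ v ∈ P2)
  T6leaf : ∀ v, G.kval v = none → (G.IsCircLeaf v ↔ v ∈ P1)

/-- Node concurrency relation of the TFG: both nodes are positive in some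
total, well-defined configuration whose restriction to `N2` is reachable. -/
def NodeConc (G : TFG V) (P2 : Set V) [DecidablePred (· ∈ P2)]
    (N2 : PetriNet ↥P2) (m2 : ↥P2 → ℕ) (v w : V) : Prop :=
  ∃ c, G.IsConfig c ∧ TotalConf c ∧ G.WellDef c ∧ N2.reach m2 (restrict c P2) ∧
    0 < cval c v ∧ 0 < cval c w



-- BEGIN AUX
section SafeAux

open Relation

variable {V : Type} [DecidableEq V]

lemma mem_aggChildren {G : TFG V} {v c : V} : c ∈ G.aggChildren v ↔ (v, c) ∈ G.A := by
  constructor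
  · intro h
    simp only [TFG.aggChildren, Finset.mem_image, Finset.mem_filter] at h
    obtain ⟨⟨a, b⟩, ⟨hab, h1⟩, h2⟩ := h
    simp only at h1 h2
    subst h1; subst h2; exact hab
  · intro h
    simp only [TFG.aggChildren, Finset.mem_image, Finset.mem_filter]
    exact ⟨(v, c), ⟨h, rfl⟩, rfl⟩

lemma mem_redParents {G : TFG V} {v x : V} : x ∈ G.redParents v ↔ (x, v) ∈ G.R := by
  constructor
  · intro h
    simp only [TFG.redParents, Finset.mem_image, Finset.mem_filter] at h
    obtain ⟨⟨a, b⟩, ⟨hab, h1⟩, h2⟩ := h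
    simp only at h1 h2
    subst h1; subst h2; exact hab
  · intro h
    simp only [TFG.redParents, Finset.mem_image, Finset.mem_filter]
    exact ⟨(x, v), ⟨h, rfl⟩, rfl⟩

/-- Well-foundedness w.r.t. in-neighbours (predecessors are smaller). -/
lemma wf_in (G : TFG V) (hT5 : ∀ v, ¬ Relation.TransGen G.Edge v v) :
    WellFounded (fun x y : V => G.Edge x y) := by
  have hfin : ∀ v : V, {x | Relation.TransGen G.Edge x v}.Finite := by
    intro v
    apply Set.Finite.subset (((G.R ∪ G.A).image Prod.fst).finite_toSet)
    intro x hx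
    simp only [Set.mem_setOf_eq] at hx
    obtain ⟨c, hc, -⟩ := Relation.TransGen.head'_iff.mp hx
    simp only [Finset.coe_image, Set.mem_image, Finset.mem_coe, Finset.mem_union]
    rcases hc with h | h
    · exact ⟨(x, c), Or.inl h, rfl⟩
    · exact ⟨(x, c), Or.inr h, rfl⟩
  set f : V → ℕ := fun v => {x | Relation.TransGen G.Edge x v}.ncard with hf
  have key : ∀ x y, G.Edge x y → f x < f y := by
    intro x y hxy
    apply Set.ncard_lt_ncard _ (hfin y)
    rw [Set.ssubset_iff_of_subset (fun z hz => hz.tail hxy)]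
    exact ⟨x, Relation.TransGen.single hxy, fun h => hT5 x h⟩
  exact Subrelation.wf (fun {x y} h => key x y h) (InvImage.wf f Nat.lt_wfRel.wf)

/-- Well-foundedness w.r.t. out-neighbours (successors are smaller). -/
lemma wf_out (G : TFG V) (hT5 : ∀ v, ¬ Relation.TransGen G.Edge v v) :
    WellFounded (fun x y : V => G.Edge y x) := by
  have hfin : ∀ v : V, {x | Relation.TransGen G.Edge v x}.Finite := by
    intro v
    apply Set.Finite.subset (((G.R ∪ G.A).image Prod.snd).finite_toSet)
    intro x hx
    simp only [Set.mem_setOf_eq] at hx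
    obtain ⟨c, -, hc⟩ := Relation.TransGen.tail'_iff.mp hx
    simp only [Finset.coe_image, Set.mem_image, Finset.mem_coe, Finset.mem_union]
    rcases hc with h | h
    · exact ⟨(c, x), Or.inl h, rfl⟩
    · exact ⟨(c, x), Or.inr h, rfl⟩
  set f : V → ℕ := fun v => {x | Relation.TransGen G.Edge v x}.ncard with hf
  have key : ∀ x y, G.Edge y x → f x < f y := by
    intro x y hxy
    apply Set.ncard_lt_ncard _ (hfin y)
    rw [Set.ssubset_iff_of_subset (fun z hz => hz.head hxy)]
    exact ⟨x, Relation.TransGen.single hxy, fun h => hT5 x h⟩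
  exact Subrelation.wf (fun {x y} h => key x y h) (InvImage.wf f Nat.lt_wfRel.wf)

/-- Splitting a quantity `d` among a finset with capacities `cap`. -/
lemma exists_alloc (cap : V → ℕ) (X : Finset V) : ∀ d : ℕ, d ≤ ∑ c ∈ X, cap c →
    ∃ g : V → ℕ, (∀ y, y ∉ X → g y = 0) ∧ (∀ y, g y ≤ cap y) ∧ ∑ c ∈ X, g c = d := by
  induction X using Finset.induction with
  | empty =>
    intro d hd
    simp only [Finset.sum_empty, Nat.le_zero] at hd
    subst hd
    exact ⟨fun _ => 0, fun _ _ => rfl, fun _ => Nat.zero_le _, by simp⟩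
  | @insert a X ha ih =>
    intro d hd
    rw [Finset.sum_insert ha] at hd
    obtain ⟨g, hg0, hgc, hgs⟩ := ih (d - min d (cap a)) (by omega)
    refine ⟨fun y => if y = a then min d (cap a) else g y, ?_, ?_, ?_⟩
    · intro y hy
      rw [Finset.mem_insert] at hy
      push_neg at hy
      simp only [if_neg hy.1]
      exact hg0 y hy.2
    · intro y
      by_cases h : y = a
      · subst h; simp only [if_pos rfl]; exact min_le_right _ _
      · simp only [if_neg h]; exact hgc y
    · rw [Finset.sum_insert ha, if_pos rfl,
        Finset.sum_congr rfl (fun y hy => if_neg (by rintro rfl; exact ha hy)), hgs]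
      omega

open Classical in
/-- The relocation delta: a token-flow delta rooted at `u`, distributed by `D`. -/
noncomputable def tdelta (G : TFG V) (wf : WellFounded (fun x y : V => G.Edge x y))
    (D : V → ℕ → V → ℕ) (u : V) : V → ℕ :=
  wf.fix (fun y rec =>
    if y = u then 1
    else if h : ∃ p, (p, y) ∈ G.A then
      D h.choose (rec h.choose (Or.inr h.choose_spec)) y
    else ∑ x ∈ (G.redParents y).attach, rec x.1 (Or.inl (mem_redParents.mp x.2)))

open Classical in
lemma tdelta_eq (G : TFG V) (wf : WellFounded (fun x y : V => G.Edge x y))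
    (D : V → ℕ → V → ℕ) (u : V) (y : V) :
    tdelta G wf D u y =
      if y = u then 1
      else if h : ∃ p, (p, y) ∈ G.A then D h.choose (tdelta G wf D u h.choose) y
      else ∑ x ∈ G.redParents y, tdelta G wf D u x := by
  unfold tdelta
  rw [WellFounded.fix_eq]
  split
  · rfl
  split
  · rfl
  · exact Finset.sum_attach _ _

section TdeltaLemmas

variable {G : TFG V} {E : EqSys V} {P1 P2 : Set V}
variable {wf : WellFounded (fun x y : V => G.Edge x y)} {D : V → ℕ → V → ℕ} {u : V}

lemma tdelta_self : tdelta G wf D u u = 1 := by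
  rw [tdelta_eq, if_pos rfl]

lemma tdelta_child (hwf : WellFormed G E P1 P2) {p y : V} (hp : (p, y) ∈ G.A) (hy : y ≠ u) :
    tdelta G wf D u y = D p (tdelta G wf D u p) y := by
  rw [tdelta_eq, if_neg hy]
  have h : ∃ q, (q, y) ∈ G.A := ⟨p, hp⟩
  rw [dif_pos h]
  have hcp : h.choose = p := hwf.T3a p h.choose y hp (Or.inr h.choose_spec)
  rw [hcp]

lemma tdelta_red {y : V} (hy : y ≠ u) (hnp : ¬ ∃ p, (p, y) ∈ G.A) :
    tdelta G wf D u y = ∑ x ∈ G.redParents y, tdelta G wf D u x := by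
  rw [tdelta_eq, if_neg hy, dif_neg hnp]

lemma tdelta_support (hwf : WellFormed G E P1 P2) (hD0 : ∀ p c, D p 0 c = 0) :
    ∀ y, tdelta G wf D u y ≠ 0 → y = u ∨ Relation.TransGen G.Edge u y := by
  intro y
  refine wf.induction
    (C := fun y => tdelta G wf D u y ≠ 0 → y = u ∨ Relation.TransGen G.Edge u y) y ?_
  intro y ih hne
  by_cases hy : y = u
  · exact Or.inl hy
  by_cases h : ∃ p, (p, y) ∈ G.A
  · obtain ⟨p, hp⟩ := h
    rw [tdelta_child hwf hp hy] at hne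
    have hdp : tdelta G wf D u p ≠ 0 := by
      intro h0
      rw [h0, hD0] at hne
      exact hne rfl
    rcases ih p (Or.inr hp) hdp with rfl | htg
    · exact Or.inr (Relation.TransGen.single (Or.inr hp))
    · exact Or.inr (htg.tail (Or.inr hp))
  · rw [tdelta_red hy h] at hne
    obtain ⟨x, hx, hxne⟩ : ∃ x ∈ G.redParents y, tdelta G wf D u x ≠ 0 := by
      by_contra hall
      push_neg at hall
      exact hne (Finset.sum_eq_zero hall)
    have hedge : G.Edge x y := Or.inl (mem_redParents.mp hx)
    rcases ih x hedge hxne with rfl | htg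
    · exact Or.inr (Relation.TransGen.single hedge)
    · exact Or.inr (htg.tail hedge)

lemma tdelta_root_zero (hwf : WellFormed G E P1 P2) (hD0 : ∀ p c, D p 0 c = 0)
    (hu : ¬ G.IsRoot u) {r : V} (hr : G.IsRoot r) : tdelta G wf D u r = 0 := by
  by_contra h
  rcases tdelta_support hwf hD0 r h with rfl | htg
  · exact hu hr
  · obtain ⟨c, -, hc⟩ := Relation.TransGen.tail'_iff.mp htg
    exact hr c hc

/-- The agglomeration equation holds for the delta, away from `u`. -/
lemma tdelta_agg_eq (hwf : WellFormed G E P1 P2) {v : V} (hu : u ∉ G.aggChildren v)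
    (hDsum : ∑ c ∈ G.aggChildren v, D v (tdelta G wf D u v) c = tdelta G wf D u v) :
    tdelta G wf D u v = ∑ c ∈ G.aggChildren v, tdelta G wf D u c := by
  rw [Finset.sum_congr rfl
    (fun c hc => tdelta_child hwf (mem_aggChildren.mp hc) (by rintro rfl; exact hu hc))]
  exact hDsum.symm

/-- At the exceptional agglomeration equation (the one with `u` as a child). -/
lemma tdelta_agg_exc (hwf : WellFormed G E P1 P2) (hD0 : ∀ p c, D p 0 c = 0)
    {v : V} (hu : u ∈ G.aggChildren v) :
    tdelta G wf D u v = 0 ∧ ∑ c ∈ G.aggChildren v, tdelta G wf D u c = 1 := by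
  have hAedge : (v, u) ∈ G.A := mem_aggChildren.mp hu
  have hvu : G.Edge v u := Or.inr hAedge
  have hvz : tdelta G wf D u v = 0 := by
    by_contra hne
    rcases tdelta_support hwf hD0 v hne with rfl | htg
    · exact hwf.T5 v (Relation.TransGen.single hvu)
    · exact hwf.T5 u (htg.tail hvu)
  refine ⟨hvz, ?_⟩
  rw [Finset.sum_eq_single_of_mem u hu ?_]
  · exact tdelta_self
  · intro c hc hcu
    rw [tdelta_child hwf (mem_aggChildren.mp hc) hcu, hvz, hD0]

/-- The redundancy equation holds for the delta when `v ≠ u`. -/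
lemma tdelta_red_eq (hwf : WellFormed G E P1 P2) {v : V} (hne : (G.redParents v).Nonempty)
    (hvu : v ≠ u) :
    tdelta G wf D u v = ∑ x ∈ G.redParents v, tdelta G wf D u x := by
  apply tdelta_red hvu
  rintro ⟨p, hp⟩
  obtain ⟨x, hx⟩ := hne
  have hxR : (x, v) ∈ G.R := mem_redParents.mp hx
  have hxp : x = p := hwf.T3a p x v hp (Or.inl hxR)
  exact hwf.T3b p v ⟨hxp ▸ hxR, hp⟩

lemma tdelta_red_u (hwf : WellFormed G E P1 P2) (hD0 : ∀ p c, D p 0 c = 0) :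
    ∑ x ∈ G.redParents u, tdelta G wf D u x = 0 := by
  apply Finset.sum_eq_zero
  intro x hx
  have hxE : G.Edge x u := Or.inl (mem_redParents.mp hx)
  by_contra hne
  rcases tdelta_support hwf hD0 x hne with rfl | htg
  · exact hwf.T5 x (Relation.TransGen.single hxE)
  · exact hwf.T5 u (htg.tail hxE)

end TdeltaLemmas

/-- Choice of a child, preferring one with a positive value. -/
noncomputable def pickC (G : TFG V) (s : V → ℕ) (p : V) : V :=
  if h : ((G.aggChildren p).filter fun c => 1 ≤ s c).Nonempty then h.choose
  else if h2 : (G.aggChildren p).Nonempty then h2.choose else p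

lemma pickC_mem {G : TFG V} {s : V → ℕ} {p : V} (h : (G.aggChildren p).Nonempty) :
    pickC G s p ∈ G.aggChildren p := by
  unfold pickC
  split
  · next hf => exact (Finset.mem_filter.mp hf.choose_spec).1
  · exact h.choose_spec

lemma pickC_pos {G : TFG V} {s : V → ℕ} {p : V} (h : ∃ c ∈ G.aggChildren p, 1 ≤ s c) :
    pickC G s p ∈ G.aggChildren p ∧ 1 ≤ s (pickC G s p) := by
  have hf : ((G.aggChildren p).filter fun c => 1 ≤ s c).Nonempty := by
    obtain ⟨c, hc, h1⟩ := h
    exact ⟨c, Finset.mem_filter.mpr ⟨hc, h1⟩⟩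
  unfold pickC
  rw [dif_pos hf]
  exact ⟨(Finset.mem_filter.mp hf.choose_spec).1, (Finset.mem_filter.mp hf.choose_spec).2⟩

/-- Distribution for the deposit delta: dump everything on the picked child. -/
noncomputable def Dplus (G : TFG V) (s : V → ℕ) : V → ℕ → V → ℕ :=
  fun p n c => if c = pickC G s p then n else 0

lemma Dplus_zero (G : TFG V) (s : V → ℕ) : ∀ p c, Dplus G s p 0 c = 0 := by
  intro p c
  unfold Dplus
  split <;> rfl

lemma Dplus_sum (G : TFG V) (s : V → ℕ) {p : V} (h : (G.aggChildren p).Nonempty) (n : ℕ) :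
    ∑ c ∈ G.aggChildren p, Dplus G s p n c = n := by
  unfold Dplus
  rw [Finset.sum_ite_eq' (G.aggChildren p) (pickC G s p) (fun _ => n),
    if_pos (pickC_mem h)]

/-- Distribution for the withdraw delta: greedy allocation below capacities `s`. -/
noncomputable def Dminus (G : TFG V) (s : V → ℕ) : V → ℕ → V → ℕ :=
  fun p n =>
    (exists_alloc s (G.aggChildren p) (min n (∑ c ∈ G.aggChildren p, s c))
      (min_le_right _ _)).choose

lemma Dminus_spec (G : TFG V) (s : V → ℕ) (p : V) (n : ℕ) :
    (∀ y, y ∉ G.aggChildren p → Dminus G s p n y = 0) ∧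
    (∀ y, Dminus G s p n y ≤ s y) ∧
    ∑ c ∈ G.aggChildren p, Dminus G s p n c = min n (∑ c ∈ G.aggChildren p, s c) :=
  (exists_alloc s (G.aggChildren p) (min n (∑ c ∈ G.aggChildren p, s c))
    (min_le_right _ _)).choose_spec

lemma Dminus_zero (G : TFG V) (s : V → ℕ) : ∀ p c, Dminus G s p 0 c = 0 := by
  intro p c
  obtain ⟨h0, hle, hsum⟩ := Dminus_spec G s p 0
  by_cases hc : c ∈ G.aggChildren p
  · rw [Nat.min_eq_left (Nat.zero_le _)] at hsum
    exact (Finset.sum_eq_zero_iff).mp hsum c hc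
  · exact h0 c hc

lemma Dminus_sum (G : TFG V) (s : V → ℕ) {p : V} {n : ℕ}
    (hn : n ≤ ∑ c ∈ G.aggChildren p, s c) :
    ∑ c ∈ G.aggChildren p, Dminus G s p n c = n := by
  rw [(Dminus_spec G s p n).2.2, Nat.min_eq_left hn]

section Main

variable {G : TFG V} {E : EqSys V} {P1 P2 : Set V}

lemma agg_mem_E (hwf : WellFormed G E P1 P2) {v : V} (h : (G.aggChildren v).Nonempty) :
    (v, G.aggChildren v) ∈ E :=
  (hwf.T4 v _).mp ⟨Or.inl rfl, h⟩

lemma red_mem_E (hwf : WellFormed G E P1 P2) {v : V} (h : (G.redParents v).Nonempty) :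
    (v, G.redParents v) ∈ E :=
  (hwf.T4 v _).mp ⟨Or.inr rfl, h⟩

lemma kval_none_of_edge (hwf : WellFormed G E P1 P2) {x y : V} (h : G.Edge x y) :
    G.kval y = none := by
  by_contra hk
  exact hwf.T2 y hk x h

/-- The withdrawal delta never exceeds `s`. -/
lemma dm_le {wf : WellFounded (fun x y : V => G.Edge x y)} {u : V}
    (hwf : WellFormed G E P1 P2) {s : V → ℕ} (hs : Solves E s) (hsu : 1 ≤ s u) :
    ∀ y, tdelta G wf (Dminus G s) u y ≤ s y := by
  intro y
  refine wf.induction (C := fun y => tdelta G wf (Dminus G s) u y ≤ s y) y ?_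
  intro y ih
  by_cases hy : y = u
  · subst hy
    rw [tdelta_self]
    exact hsu
  by_cases h : ∃ p, (p, y) ∈ G.A
  · obtain ⟨p, hp⟩ := h
    rw [tdelta_child hwf hp hy]
    exact (Dminus_spec G s p _).2.1 y
  · rw [tdelta_red hy h]
    rcases (G.redParents y).eq_empty_or_nonempty with he | hne
    · simp [he]
    · have hE : (y, G.redParents y) ∈ E := red_mem_E hwf hne
      have hsy : s y = ∑ x ∈ G.redParents y, s x := hs _ hE
      rw [hsy]
      exact Finset.sum_le_sum (fun x hx => ih x (Or.inl (mem_redParents.mp hx)))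

/-- The deposit delta reaches a positive leaf in `P1` along agglomeration arcs. -/
lemma dplus_target {wf : WellFounded (fun x y : V => G.Edge x y)} {u : V}
    (hwf : WellFormed G E P1 P2) {s : V → ℕ} (hs : Solves E s)
    (wfo : WellFounded (fun x y : V => G.Edge y x)) :
    ∀ x, (x = u ∨ Relation.TransGen G.Edge u x) → G.kval x = none → 1 ≤ s x →
      1 ≤ tdelta G wf (Dplus G s) u x →
      ∃ l, l ∈ P1 ∧ 1 ≤ s l ∧ 1 ≤ tdelta G wf (Dplus G s) u l ∧
        Relation.ReflTransGen (fun a b => (a, b) ∈ G.A) x l := by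
  intro x
  refine wfo.induction (C := fun x => (x = u ∨ Relation.TransGen G.Edge u x) →
      G.kval x = none → 1 ≤ s x → 1 ≤ tdelta G wf (Dplus G s) u x →
      ∃ l, l ∈ P1 ∧ 1 ≤ s l ∧ 1 ≤ tdelta G wf (Dplus G s) u l ∧
        Relation.ReflTransGen (fun a b => (a, b) ∈ G.A) x l) x ?_
  intro x ih hcl hk hsx hdx
  rcases (G.aggChildren x).eq_empty_or_nonempty with he | hne
  · have hleaf : G.IsCircLeaf x := by
      intro w hw
      have : w ∈ G.aggChildren x := mem_aggChildren.mpr hw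
      rw [he] at this
      exact absurd this (Finset.notMem_empty w)
    exact ⟨x, (hwf.T6leaf x hk).mp hleaf, hsx, hdx, Relation.ReflTransGen.refl⟩
  · have hxE : (x, G.aggChildren x) ∈ E := agg_mem_E hwf hne
    have hsum : s x = ∑ c ∈ G.aggChildren x, s c := hs _ hxE
    have hex : ∃ c ∈ G.aggChildren x, 1 ≤ s c := by
      by_contra hall
      push_neg at hall
      have h0 : ∑ c ∈ G.aggChildren x, s c = 0 :=
        Finset.sum_eq_zero (fun c hc => by have := hall c hc; omega)
      omega
    obtain ⟨hcmem, hcpos⟩ := pickC_pos (s := s) hex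
    obtain ⟨c, hc⟩ : ∃ c, c = pickC G s x := ⟨_, rfl⟩
    rw [← hc] at hcmem hcpos
    have hAxc : (x, c) ∈ G.A := mem_aggChildren.mp hcmem
    have hedge : G.Edge x c := Or.inr hAxc
    have hcu : c ≠ u := by
      rintro rfl
      rcases hcl with rfl | htg
      · exact hwf.T5 x (Relation.TransGen.single hedge)
      · exact hwf.T5 c (htg.tail hedge)
    have hdc : tdelta G wf (Dplus G s) u c = tdelta G wf (Dplus G s) u x := by
      rw [tdelta_child hwf hAxc hcu]
      unfold Dplus
      rw [if_pos hc]
    have hkc : G.kval c = none := kval_none_of_edge hwf hedge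
    have hclc : c = u ∨ Relation.TransGen G.Edge u c := by
      rcases hcl with rfl | htg
      · exact Or.inr (Relation.TransGen.single hedge)
      · exact Or.inr (htg.tail hedge)
    obtain ⟨l, h1, h2, h3, h4⟩ := ih c hedge hclc hkc hcpos (by rw [hdc]; exact hdx)
    exact ⟨l, h1, h2, h3, Relation.ReflTransGen.head hAxc h4⟩

/-- Two siblings of an agglomeration cannot reach one another's A-descendants. -/
lemma rtgA_block (hwf : WellFormed G E P1 P2) {v w1 w2 : V}
    (h1 : (v, w1) ∈ G.A) (h2 : (v, w2) ∈ G.A) (hne : w1 ≠ w2) :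
    ¬ Relation.ReflTransGen (fun a b => (a, b) ∈ G.A) w1 w2 := by
  intro h
  rcases h.cases_tail with heq | ⟨b, hb, hbw2⟩
  · exact hne heq.symm
  · have hbv : b = v := hwf.T3a v b w2 h2 (Or.inr hbw2)
    subst hbv
    have hrt : Relation.ReflTransGen G.Edge w1 b :=
      Relation.ReflTransGen.mono (fun a b h => Or.inr h) _ _ hb
    exact hwf.T5 b (Relation.TransGen.head' (Or.inr h1) hrt)

lemma chain_block (hwf : WellFormed G E P1 P2) {v w1 w2 : V}
    (h1 : (v, w1) ∈ G.A) (h2 : (v, w2) ∈ G.A) (hne : w1 ≠ w2) :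
    ∀ l, Relation.ReflTransGen (fun a b => (a, b) ∈ G.A) w1 l →
      (l = w2 ∨ Relation.TransGen G.Edge w2 l) → False := by
  intro l hl
  induction hl with
  | refl =>
    rintro (rfl | htg)
    · exact hne rfl
    · obtain ⟨c, hc, hcw1⟩ := Relation.TransGen.tail'_iff.mp htg
      have hcv : c = v := hwf.T3a v c w1 h1 hcw1
      subst hcv
      exact hwf.T5 c (Relation.TransGen.head' (Or.inr h2) hc)
  | @tail b l' hb hstep ih =>
    rintro (rfl | htg)
    · have hbv : b = v := hwf.T3a v b l' h2 (Or.inr hstep)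
      subst hbv
      have hrt : Relation.ReflTransGen G.Edge w1 b :=
        Relation.ReflTransGen.mono (fun a b h => Or.inr h) _ _ hb
      exact hwf.T5 b (Relation.TransGen.head' (Or.inr h1) hrt)
    · obtain ⟨c, hc, hcl⟩ := Relation.TransGen.tail'_iff.mp htg
      have hcb : c = b := hwf.T3a b c l' hstep hcl
      subst hcb
      rcases Relation.reflTransGen_iff_eq_or_transGen.mp hc with rfl | htg'
      · exact ih (Or.inl rfl)
      · exact ih (Or.inr htg')

/-- Descent: a non-constant node with at least two tokens yields two positive siblings. -/
lemma exists_two (hwf : WellFormed G E P1 P2) {s : V → ℕ} (hs : Solves E s)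
    (hle : ∀ a ∈ P1, s a ≤ 1) (wfo : WellFounded (fun x y : V => G.Edge y x)) :
    ∀ x, G.kval x = none → 2 ≤ s x →
      ∃ v w1 w2, (v, w1) ∈ G.A ∧ (v, w2) ∈ G.A ∧ w1 ≠ w2 ∧ 1 ≤ s w1 ∧ 1 ≤ s w2 := by
  intro x
  refine wfo.induction (C := fun x => G.kval x = none → 2 ≤ s x →
      ∃ v w1 w2, (v, w1) ∈ G.A ∧ (v, w2) ∈ G.A ∧ w1 ≠ w2 ∧ 1 ≤ s w1 ∧ 1 ≤ s w2) x ?_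
  intro x ih hk h2
  rcases (G.aggChildren x).eq_empty_or_nonempty with he | hne
  · have hleaf : G.IsCircLeaf x := by
      intro w hw
      have : w ∈ G.aggChildren x := mem_aggChildren.mpr hw
      rw [he] at this
      exact absurd this (Finset.notMem_empty w)
    have := hle x ((hwf.T6leaf x hk).mp hleaf)
    omega
  · have hsum : s x = ∑ c ∈ G.aggChildren x, s c := hs _ (agg_mem_E hwf hne)
    by_cases hbig : ∃ c ∈ G.aggChildren x, 2 ≤ s c
    · obtain ⟨c, hc, h2c⟩ := hbig
      have hedge : G.Edge x c := Or.inr (mem_aggChildren.mp hc)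
      exact ih c hedge (kval_none_of_edge hwf hedge) h2c
    · push_neg at hbig
      obtain ⟨c1, hc1, h1⟩ : ∃ c ∈ G.aggChildren x, 1 ≤ s c := by
        by_contra hall
        push_neg at hall
        have h0 : ∑ c ∈ G.aggChildren x, s c = 0 :=
          Finset.sum_eq_zero (fun c hc => by have := hall c hc; omega)
        omega
      have hsplit : s c1 + ∑ c ∈ (G.aggChildren x).erase c1, s c
          = ∑ c ∈ G.aggChildren x, s c := Finset.add_sum_erase _ s hc1
      have hb1 := hbig c1 hc1
      obtain ⟨c2, hc2, h2c⟩ : ∃ c ∈ (G.aggChildren x).erase c1, 1 ≤ s c := by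
        by_contra hall
        push_neg at hall
        have h0 : ∑ c ∈ (G.aggChildren x).erase c1, s c = 0 :=
          Finset.sum_eq_zero (fun c hc => by have := hall c hc; omega)
        omega
      exact ⟨x, c1, c2, mem_aggChildren.mp hc1,
        mem_aggChildren.mp (Finset.mem_of_mem_erase hc2),
        (Finset.ne_of_mem_erase hc2).symm, h1, h2c⟩

lemma sum_add_sub_distrib (X : Finset V) (f g h : V → ℕ) (hle : ∀ x, h x ≤ f x) :
    ∑ x ∈ X, (f x + g x - h x) = ∑ x ∈ X, f x + ∑ x ∈ X, g x - ∑ x ∈ X, h x := by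
  induction X using Finset.induction with
  | empty => simp
  | @insert a X ha ih =>
    rw [Finset.sum_insert ha, Finset.sum_insert ha, Finset.sum_insert ha,
      Finset.sum_insert ha, ih]
    have h1 : h a ≤ f a := hle a
    have h2 : ∑ x ∈ X, h x ≤ ∑ x ∈ X, f x := Finset.sum_le_sum (fun x _ => hle x)
    omega

/-- No redundancy parents below an agglomeration. -/
lemma redParents_empty_of_Aparent (hwf : WellFormed G E P1 P2) {p y : V}
    (hp : (p, y) ∈ G.A) : G.redParents y = ∅ := by
  rw [Finset.eq_empty_iff_forall_notMem]
  intro x hx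
  have hxR : (x, y) ∈ G.R := mem_redParents.mp hx
  have hxp : x = p := hwf.T3a p x y hp (Or.inl hxR)
  exact hwf.T3b p y ⟨hxp ▸ hxR, hp⟩

end Main

end SafeAux

-- END AUX

theorem safeness_preservation {V : Type} [DecidableEq V] (G : TFG V) (E : EqSys V)
    (P1 P2 : Set V) [DecidablePred (· ∈ P1)] [DecidablePred (· ∈ P2)]
    (N1 : PetriNet ↥P1) (m1 : ↥P1 → ℕ) (N2 : PetriNet ↥P2) (m2 : ↥P2 → ℕ)
    (hwf : WellFormed G E P1 P2) (heq : EEquiv E P1 P2 N1 m1 N2 m2) (hsafe : N1.Safe m1) :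
    N2.Safe m2 := by
  intro m hm p
  by_contra hmle
  obtain ⟨s, hs, hag⟩ := heq.A1r m hm
  have h2 : 2 ≤ s ↑p := by have := hag p; omega
  have hr1 : N1.reach m1 (fun a : ↥P1 => s ↑a) :=
    (heq.A3 (fun a : ↥P1 => s ↑a) m ⟨s, hs, fun a => rfl, hag⟩).mpr hm
  have hP1 : ∀ a ∈ P1, s a ≤ 1 := fun a ha => hsafe _ hr1 ⟨a, ha⟩
  have wfi : WellFounded (fun x y : V => G.Edge x y) := wf_in G hwf.T5
  have wfo : WellFounded (fun x y : V => G.Edge y x) := wf_out G hwf.T5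
  have hkp : G.kval ↑p = none := by
    have hmem : (↑p : V) ∈ {v | G.kval v = none} := by
      rw [hwf.T1]; exact Or.inl (Or.inr p.2)
    exact hmem
  obtain ⟨v, w1, w2, hv1, hv2, hw12, hs1, hs2⟩ :=
    exists_two hwf hs hP1 wfo ↑p hkp h2
  have hkw1 : G.kval w1 = none := kval_none_of_edge hwf (Or.inr hv1)
  have hdmle : ∀ y, tdelta G wfi (Dminus G s) w2 y ≤ s y := dm_le hwf hs hs2
  have hsol : Solves E (fun y =>
      s y + tdelta G wfi (Dplus G s) w1 y - tdelta G wfi (Dminus G s) w2 y) := by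
    rintro ⟨v', X⟩ he
    obtain ⟨hform, hXne⟩ := (hwf.T4 v' X).mpr he
    have hsv : s v' = ∑ x ∈ X, s x := hs (v', X) he
    dsimp only
    rw [sum_add_sub_distrib X s (tdelta G wfi (Dplus G s) w1)
      (tdelta G wfi (Dminus G s) w2) (fun x => hdmle x)]
    rcases hform with rfl | rfl
    · by_cases hw1 : w1 ∈ G.aggChildren v'
      · have hvv : v' = v := hwf.T3a v v' w1 hv1 (Or.inr (mem_aggChildren.mp hw1))
        subst hvv
        have hw2 : w2 ∈ G.aggChildren v' := mem_aggChildren.mpr hv2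
        obtain ⟨hp0, hp1⟩ := tdelta_agg_exc (wf := wfi) hwf (Dplus_zero G s) hw1
        obtain ⟨hm0, hm1⟩ := tdelta_agg_exc (wf := wfi) hwf (Dminus_zero G s) hw2
        omega
      · have hw2 : w2 ∉ G.aggChildren v' := by
          intro hmem
          have hvv : v' = v := hwf.T3a v v' w2 hv2 (Or.inr (mem_aggChildren.mp hmem))
          subst hvv
          exact hw1 (mem_aggChildren.mpr hv1)
        have hp : tdelta G wfi (Dplus G s) w1 v'
            = ∑ c ∈ G.aggChildren v', tdelta G wfi (Dplus G s) w1 c :=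
          tdelta_agg_eq hwf hw1 (Dplus_sum G s hXne _)
        have hmsum : tdelta G wfi (Dminus G s) w2 v' ≤ ∑ c ∈ G.aggChildren v', s c := by
          have := hdmle v'
          omega
        have hm : tdelta G wfi (Dminus G s) w2 v'
            = ∑ c ∈ G.aggChildren v', tdelta G wfi (Dminus G s) w2 c :=
          tdelta_agg_eq hwf hw2 (Dminus_sum G s hmsum)
        omega
    · have hne1 : v' ≠ w1 := by
        rintro rfl
        rw [redParents_empty_of_Aparent hwf hv1] at hXne
        exact Finset.not_nonempty_empty hXne
      have hne2 : v' ≠ w2 := by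
        rintro rfl
        rw [redParents_empty_of_Aparent hwf hv2] at hXne
        exact Finset.not_nonempty_empty hXne
      have hp : tdelta G wfi (Dplus G s) w1 v'
          = ∑ x ∈ G.redParents v', tdelta G wfi (Dplus G s) w1 x :=
        tdelta_red_eq hwf hXne hne1
      have hm : tdelta G wfi (Dminus G s) w2 v'
          = ∑ x ∈ G.redParents v', tdelta G wfi (Dminus G s) w2 x :=
        tdelta_red_eq hwf hXne hne2
      omega
  have hag2 : AgreesOn (fun y =>
      s y + tdelta G wfi (Dplus G s) w1 y - tdelta G wfi (Dminus G s) w2 y) P2 m := by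
    intro q
    have hkq : G.kval ↑q = none := by
      have hmem : (↑q : V) ∈ {v | G.kval v = none} := by
        rw [hwf.T1]; exact Or.inl (Or.inr q.2)
      exact hmem
    have hroot : G.IsRoot ↑q := (hwf.T6root _ hkq).mpr q.2
    have hz1 : tdelta G wfi (Dplus G s) w1 ↑q = 0 :=
      tdelta_root_zero hwf (Dplus_zero G s) (fun hr => hr v (Or.inr hv1)) hroot
    have hz2 : tdelta G wfi (Dminus G s) w2 ↑q = 0 :=
      tdelta_root_zero hwf (Dminus_zero G s) (fun hr => hr v (Or.inr hv2)) hroot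
    have := hag q
    dsimp only
    omega
  obtain ⟨l, hlP1, hsl, hdl, hpath⟩ := dplus_target (wf := wfi) hwf hs wfo w1
    (Or.inl rfl) hkw1 hs1 (le_of_eq tdelta_self.symm)
  have hdml : tdelta G wfi (Dminus G s) w2 l = 0 := by
    by_contra h
    rcases tdelta_support hwf (Dminus_zero G s) l h with rfl | htg
    · exact chain_block hwf hv1 hv2 hw12 _ hpath (Or.inl rfl)
    · exact chain_block hwf hv1 hv2 hw12 l hpath (Or.inr htg)
  have hr2 : N1.reach m1 (fun a : ↥P1 =>
      s ↑a + tdelta G wfi (Dplus G s) w1 ↑a - tdelta G wfi (Dminus G s) w2 ↑a) :=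
    (heq.A3 _ m ⟨_, hsol, fun a => rfl, hag2⟩).mpr hm
  have hbad := hsafe _ hr2 ⟨l, hlP1⟩
  dsimp only at hbad
  omega
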